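/- Define the integer sequence a by a_0 = 1 and a_{n+1} = −C_n for n ≥ 0 (the expansion of 1 − x·c(x) = 1/c(x)). Then for every n, det((a_{i+j})_{0≤i,j≤n}) = (−1)^n·(n+1). -/

import Mathlib

def hb : ℕ → ℕ → ℤ
  | 0, 0 => 1
  | 0, _+1 => 0
  | i+1, 0 => hb i 0 + hb i 1
  | i+1, k+1 => hb i k + 2 * hb i (k+1) + hb i (k+2)

lemma hb_eq_zero : ∀ i k : ℕ, i < k → hb i k = 0 := by
  intro i
  induction i with
  | zero => intro k hk; match k, hk with | k+1, _ => rfl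
  | succ i ih =>
    intro k hk
    match k, hk with
    | k+1, hk =>
      show hb i k + 2 * hb i (k+1) + hb i (k+2) = 0
      rw [ih k (by omega), ih (k+1) (by omega), ih (k+2) (by omega)]
      ring

lemma hb_diag : ∀ i : ℕ, hb i i = 1 := by
  intro i
  induction i with
  | zero => rfl
  | succ i ih =>
    show hb i i + 2 * hb i (i+1) + hb i (i+2) = 1
    rw [ih, hb_eq_zero i (i+1) (by omega), hb_eq_zero i (i+2) (by omega)]
    ring

lemma pascal2 (N m : ℕ) :
    (N+2).choose (m+2) = N.choose m + 2 * N.choose (m+1) + N.choose (m+2) := by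
  rw [show N+2 = (N+1)+1 from rfl, Nat.choose_succ_succ (N+1) (m+1), Nat.choose_succ_succ N m,
    Nat.choose_succ_succ N (m+1)]
  ring

lemma hb_closed : ∀ i k : ℕ, k ≤ i →
    hb i k = ((2*i).choose (i-k) : ℤ) - ((2*i).choose (i+k+1) : ℤ) := by
  intro i
  induction i with
  | zero => intro k hk; interval_cases k; simp [hb]
  | succ i ih =>
    intro k hk
    match k with
    | 0 =>
      show hb i 0 + hb i 1 = _
      match i with
      | 0 => show (1:ℤ) + 0 = _ ; decide
      | t+1 =>
        rw [ih 0 (by omega), ih 1 (by omega)]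
        have p1 := pascal2 (2*t+2) t
        have p2 := pascal2 (2*t+2) (t+1)
        simp only [show t+1-0 = t+1 by omega, show t+1-1 = t by omega,
          show t+1+1-0 = t+2 by omega]
        push_cast [p1, p2]
        ring_nf
        ring_nf at p1 p2
        push_cast at p1 p2
        omega
    | k+1 =>
      show hb i k + 2 * hb i (k+1) + hb i (k+2) = _
      by_cases hc1 : k = i
      · subst hc1
        rw [hb_diag k, hb_eq_zero k (k+1) (by omega), hb_eq_zero k (k+2) (by omega)]
        rw [show k+1-(k+1) = 0 by omega, Nat.choose_zero_right,
          Nat.choose_eq_zero_of_lt (show 2*(k+1) < k+1+(k+1)+1 by omega)]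
        push_cast
      · by_cases hc2 : k + 1 = i
        · obtain rfl : i = k+1 := hc2.symm
          rw [ih k (by omega), hb_diag (k+1), hb_eq_zero (k+1) (k+2) (by omega)]
          rw [show k+1-k = 1 by omega, show k+1+1-(k+1) = 1 by omega,
            Nat.choose_one_right, Nat.choose_one_right,
            show k+1+k+1 = 2*(k+1) by ring, show k+1+1+(k+1)+1 = 2*(k+1+1) by ring,
            Nat.choose_self, Nat.choose_self]
          push_cast
          ring
        · -- k+2 ≤ i
          obtain ⟨t, rfl⟩ : ∃ t, i = k+2+t := ⟨i - (k+2), by omega⟩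
          rw [ih k (by omega), ih (k+1) (by omega), ih (k+2) (by omega)]
          have p1 := pascal2 (2*(k+2+t)) t
          have p2 := pascal2 (2*(k+2+t)) (2*k+t+3)
          simp only [show k+2+t-k = t+2 by omega, show k+2+t-(k+1) = t+1 by omega,
            show k+2+t-(k+2) = t by omega, show k+2+t+1-(k+1) = t+2 by omega]
          push_cast [p1, p2]
          ring_nf
          ring_nf at p1 p2
          push_cast at p1 p2
          omega

lemma hb_zero_col (m : ℕ) : hb m 0 = catalan m := by
  rw [hb_closed m 0 (Nat.zero_le m), Nat.sub_zero, Nat.add_zero]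
  have h1 : (m + 1) * catalan m = (2*m).choose m := by
    rw [succ_mul_catalan_eq_centralBinom, Nat.centralBinom]
  have h2 : (2*m).choose (m+1) * (m+1) = (2*m).choose m * m := by
    rw [Nat.choose_succ_right_eq, show 2*m - m = m by omega]
  have hne : ((m:ℤ) + 1) ≠ 0 := by positivity
  have : ((m:ℤ)+1) * (((2*m).choose m : ℤ) - ((2*m).choose (m+1) : ℤ))
      = ((m:ℤ)+1) * (catalan m : ℤ) := by
    have h1' : ((m:ℤ) + 1) * (catalan m : ℤ) = ((2*m).choose m : ℤ) := by exact_mod_cast h1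
    have h2' : ((2*m).choose (m+1) : ℤ) * ((m:ℤ)+1) = ((2*m).choose m : ℤ) * m := by
      exact_mod_cast h2
    nlinarith [h1', h2']
  exact mul_left_cancel₀ hne this

open Finset in
lemma hb_sum_ext (i : ℕ) (c : ℕ → ℤ) {K K' : ℕ} (hK : i < K) (hK' : i < K') :
    ∑ k ∈ range K, hb i k * c k = ∑ k ∈ range K', hb i k * c k := by
  have base : ∀ {N : ℕ}, i < N → ∑ k ∈ range N, hb i k * c k
      = ∑ k ∈ range (i+1), hb i k * c k := by
    intro N hN
    refine (Finset.sum_subset (by rw [range_subset_range]; omega) ?_).symm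
    intro x _ hx
    rw [hb_eq_zero i x (by simp [mem_range] at hx ⊢; omega), zero_mul]
  rw [base hK, base hK']

open Finset in
/-- The common core: expanding `hb (j+1)` via its recurrence and re-summing. -/
lemma hb_gen (v : ℕ → ℤ) (j : ℕ) :
    ∑ l ∈ range (j+3), hb (j+1) l * v l
      = hb j 0 * (v 1 + v 0)
        + ∑ l ∈ range (j+2), hb j (l+1) * (v (l+2) + 2 * v (l+1) + v l) := by
  rw [Finset.sum_range_succ' (fun l => hb (j+1) l * v l) (j+2)]
  have e1 : ∀ l, hb (j+1) (l+1) * v (l+1)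
      = hb j l * v (l+1) + 2 * (hb j (l+1) * v (l+1)) + hb j (l+2) * v (l+1) := by
    intro l; show (hb j l + 2 * hb j (l+1) + hb j (l+2)) * v (l+1) = _; ring
  simp only [e1]
  rw [Finset.sum_add_distrib, Finset.sum_add_distrib]
  have A1 : ∑ l ∈ range (j+2), hb j l * v (l+1)
      = hb j 0 * v 1 + ∑ l ∈ range (j+2), hb j (l+1) * v (l+2) := by
    rw [Finset.sum_range_succ' (fun l => hb j l * v (l+1)) (j+1),
      Finset.sum_range_succ (fun l => hb j (l+1) * v (l+2)) (j+1),
      hb_eq_zero j (j+2) (by omega)]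
    ring
  have A3 : ∑ l ∈ range (j+2), hb j (l+2) * v (l+1)
      = ∑ l ∈ range (j+2), hb j (l+1) * v l - hb j 1 * v 0 := by
    rw [Finset.sum_range_succ' (fun l => hb j (l+1) * v l) (j+1),
      Finset.sum_range_succ (fun l => hb j (l+2) * v (l+1)) (j+1),
      hb_eq_zero j (j+3) (by omega)]
    ring
  have hb0 : hb (j+1) 0 = hb j 0 + hb j 1 := rfl
  rw [A1, A3, hb0]
  have : ∑ l ∈ range (j+2), hb j (l+1) * (v (l+2) + 2 * v (l+1) + v l)
      = ∑ l ∈ range (j+2), hb j (l+1) * v (l+2)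
        + 2 * ∑ l ∈ range (j+2), hb j (l+1) * v (l+1)
        + ∑ l ∈ range (j+2), hb j (l+1) * v l := by
    rw [Finset.mul_sum, ← Finset.sum_add_distrib, ← Finset.sum_add_distrib]
    exact Finset.sum_congr rfl (fun l _ => by ring)
  rw [this, Finset.mul_sum]
  ring

/-- Entries of the middle matrix `W`. -/
def hw (k l : ℕ) : ℤ := (-1)^(k+l) * (max k l + 1)

lemma hw_symm (k l : ℕ) : hw k l = hw l k := by
  unfold hw; rw [add_comm k l, max_comm]

lemma hw_base (k : ℕ) : hw 1 k + hw 0 k = if 0 = k then -1 else 0 := by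
  unfold hw
  match k with
  | 0 => norm_num
  | k+1 =>
    rw [if_neg (by omega), Nat.max_eq_right (by omega : 1 ≤ k+1),
      Nat.max_eq_right (by omega : 0 ≤ k+1),
      show 1+(k+1) = (0+(k+1))+1 by ring, pow_succ]
    ring

lemma hw_step (l k : ℕ) :
    hw (l+2) k + 2 * hw (l+1) k + hw l k = if l+1 = k then -1 else 0 := by
  unfold hw
  have e2 : (-1:ℤ)^(l+2+k) = (-1)^(l+k) := by
    rw [show l+2+k = (l+k)+2 by ring, pow_add]; norm_num
  have e1 : (-1:ℤ)^(l+1+k) = -(-1)^(l+k) := by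
    rw [show l+1+k = (l+k)+1 by ring, pow_succ]; ring
  rcases Nat.lt_trichotomy k (l+1) with hc | hc | hc
  · rw [if_neg (by omega), Nat.max_eq_left (by omega), Nat.max_eq_left (by omega),
      Nat.max_eq_left (by omega), e1, e2]
    push_cast; ring
  · subst hc
    rw [if_pos rfl, Nat.max_eq_left (by omega), Nat.max_eq_right (by omega),
      Nat.max_eq_right (by omega), e1, e2,
      show (-1:ℤ)^(l+(l+1)) = -1 by
        rw [show l+(l+1) = 2*l+1 by ring, pow_succ, pow_mul]; norm_num]
    push_cast; ring
  · rw [if_neg (by omega), Nat.max_eq_right (by omega), Nat.max_eq_right (by omega),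
      Nat.max_eq_right (by omega), e1, e2]
    push_cast; ring

open Finset in
lemma hb_hw (j k : ℕ) {L : ℕ} (hL : j+1 < L) :
    ∑ l ∈ range L, hb (j+1) l * hw l k = -(hb j k) := by
  rw [hb_sum_ext (j+1) (fun l => hw l k) hL (show j+1 < j+3 by omega),
    hb_gen (fun l => hw l k) j]
  have : ∑ l ∈ range (j+2), hb j (l+1) * (hw (l+2) k + 2 * hw (l+1) k + hw l k)
      = ∑ l ∈ range (j+2), (if l+1 = k then -(hb j (l+1)) else 0) := by
    refine Finset.sum_congr rfl fun l _ => ?_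
    rw [hw_step]
    split_ifs <;> ring
  rw [this, hw_base]
  match k with
  | 0 => simp
  | k+1 =>
    rw [if_neg (by omega)]
    simp only [Nat.add_right_cancel_iff]
    rw [Finset.sum_ite_eq' (range (j+2)) k (fun l => -(hb j (l+1)))]
    by_cases hk : k ∈ range (j+2)
    · rw [if_pos hk]; ring
    · rw [if_neg hk, hb_eq_zero j (k+1) (by simp [mem_range] at hk; omega)]
      ring

open Finset in
lemma hb_sum_ext' (a : ℕ) (c : ℕ → ℤ) {K K' : ℕ} (hK : a ≤ K) (hK' : a ≤ K') :
    ∑ k ∈ range K, hb a (k+1) * c k = ∑ k ∈ range K', hb a (k+1) * c k := by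
  have base : ∀ {N : ℕ}, a ≤ N → ∑ k ∈ range N, hb a (k+1) * c k
      = ∑ k ∈ range a, hb a (k+1) * c k := by
    intro N hN
    refine (Finset.sum_subset (by rw [range_subset_range]; omega) ?_).symm
    intro x _ hx
    rw [hb_eq_zero a (x+1) (by simp [mem_range] at hx ⊢; omega), zero_mul]
  rw [base hK, base hK']

open Finset in
lemma hb_key (a b N : ℕ) (ha : a+1 < N) (hb' : b+1 < N) :
    ∑ l ∈ range N, hb (a+1) l * hb b l
      = ∑ l ∈ range (N+1), hb a l * hb b (l+1)
        + ∑ l ∈ range (N+1), hb b l * hb a (l+1)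
        + 2 * ∑ l ∈ range N, hb a (l+1) * hb b (l+1)
        + hb a 0 * hb b 0 := by
  rw [hb_sum_ext (a+1) (hb b) (by omega) (show a+1 < a+3 by omega), hb_gen (hb b) a,
    hb_sum_ext' a (fun l => hb b (l+2) + 2 * hb b (l+1) + hb b l) (by omega : a ≤ a+2)
      (by omega : a ≤ N)]
  have split : ∑ l ∈ range N, hb a (l+1) * (hb b (l+2) + 2 * hb b (l+1) + hb b l)
      = ∑ l ∈ range N, hb a (l+1) * hb b (l+2)
        + 2 * ∑ l ∈ range N, hb a (l+1) * hb b (l+1)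
        + ∑ l ∈ range N, hb a (l+1) * hb b l := by
    rw [Finset.mul_sum, ← Finset.sum_add_distrib, ← Finset.sum_add_distrib]
    exact Finset.sum_congr rfl (fun l _ => by ring)
  have up : ∑ l ∈ range (N+1), hb a l * hb b (l+1)
      = ∑ l ∈ range N, hb a (l+1) * hb b (l+2) + hb a 0 * hb b 1 :=
    Finset.sum_range_succ' (fun l => hb a l * hb b (l+1)) N
  have dn : ∑ l ∈ range (N+1), hb b l * hb a (l+1)
      = ∑ l ∈ range N, hb a (l+1) * hb b l := by
    rw [Finset.sum_range_succ, hb_eq_zero a (N+1) (by omega), mul_zero, add_zero]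
    exact Finset.sum_congr rfl (fun l _ => mul_comm _ _)
  rw [split, up, dn]
  ring

open Finset in
lemma hb_swap (i j N : ℕ) (hi : i+1 < N) (hj : j+1 < N) :
    ∑ l ∈ range N, hb (i+1) l * hb j l = ∑ l ∈ range N, hb i l * hb (j+1) l := by
  rw [hb_key i j N hi hj,
    show (∑ l ∈ range N, hb i l * hb (j+1) l) = ∑ l ∈ range N, hb (j+1) l * hb i l from
      Finset.sum_congr rfl (fun l _ => mul_comm _ _),
    hb_key j i N hj hi,
    show (∑ l ∈ range N, hb j (l+1) * hb i (l+1)) = ∑ l ∈ range N, hb i (l+1) * hb j (l+1) from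
      Finset.sum_congr rfl (fun l _ => mul_comm _ _)]
  ring

open Finset in
lemma hb_catalan : ∀ i j N : ℕ, i + j + 1 < N →
    ∑ l ∈ range N, hb i l * hb j l = catalan (i+j) := by
  intro i
  induction i with
  | zero =>
    intro j N hN
    rw [Finset.sum_eq_single_of_mem 0 (by simp [mem_range]; omega)
      (fun l _ hl => by
        match l, hl with
        | l+1, _ => rw [show hb 0 (l+1) = 0 from rfl, zero_mul])]
    rw [show hb 0 0 = 1 from rfl, one_mul, hb_zero_col, Nat.zero_add]
  | succ i ih =>
    intro j N hN
    rw [hb_swap i j N (by omega) (by omega), ih (j+1) N (by omega),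
      show i+(j+1) = i+1+j by ring]

open Finset in
lemma hb_mul_hb (i j : ℕ) {N : ℕ} (hN : i < N) :
    ∑ l ∈ range N, hb i l * hb j l = catalan (i+j) := by
  rw [hb_sum_ext i (hb j) hN (show i < i+j+2 by omega)]
  exact hb_catalan i j (i+j+2) (by omega)

open Finset in
lemma e_succ (i j : ℕ) {N : ℕ} (hi : i < N) (hj : j+1 < N) :
    ∑ k ∈ range N, ∑ l ∈ range N, hb i k * hw k l * hb (j+1) l = -(catalan (i+j)) := by
  have inner : ∀ k, ∑ l ∈ range N, hb i k * hw k l * hb (j+1) l = hb i k * -(hb j k) := by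
    intro k
    rw [show (∑ l ∈ range N, hb i k * hw k l * hb (j+1) l)
        = hb i k * ∑ l ∈ range N, hb (j+1) l * hw l k by
      rw [Finset.mul_sum]
      exact Finset.sum_congr rfl fun l _ => by rw [hw_symm]; ring]
    rw [hb_hw j k hj]
  simp only [inner]
  rw [show (∑ k ∈ range N, hb i k * -(hb j k)) = -∑ k ∈ range N, hb i k * hb j k by
    rw [← Finset.sum_neg_distrib]
    exact Finset.sum_congr rfl fun k _ => by ring]
  rw [hb_mul_hb i j hi]

open Finset in
lemma e_symm (i j : ℕ) (N : ℕ) :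
    ∑ k ∈ range N, ∑ l ∈ range N, hb i k * hw k l * hb j l
      = ∑ k ∈ range N, ∑ l ∈ range N, hb j k * hw k l * hb i l := by
  rw [Finset.sum_comm]
  exact Finset.sum_congr rfl fun l _ => Finset.sum_congr rfl fun k _ => by
    rw [hw_symm]; ring

open Finset in
lemma e_main (i j : ℕ) {N : ℕ} (hi : i < N) (hj : j < N) :
    ∑ l ∈ range N, ∑ k ∈ range N, hb i k * hw k l * hb j l
      = if i + j = 0 then 1 else -(catalan (i+j-1) : ℤ) := by
  rw [Finset.sum_comm]
  match j with
  | j+1 =>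
    rw [e_succ i j hi hj, if_neg (by omega), show i+(j+1)-1 = i+j by omega]
  | 0 =>
    match i with
    | 0 =>
      rw [if_pos rfl]
      rw [Finset.sum_eq_single_of_mem 0 (by simp [mem_range]; omega)
        (fun k _ hk => by
          match k, hk with
          | k+1, _ =>
            rw [Finset.sum_eq_zero]
            intro l _
            rw [show hb 0 (k+1) = 0 from rfl]; ring)]
      rw [Finset.sum_eq_single_of_mem 0 (by simp [mem_range]; omega)
        (fun l _ hl => by
          match l, hl with
          | l+1, _ => rw [show hb 0 (l+1) = 0 from rfl]; ring)]
      show hb 0 0 * hw 0 0 * hb 0 0 = 1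
      show (1:ℤ) * ((-1)^(0+0) * (max 0 0 + 1)) * 1 = 1
      norm_num
    | i+1 =>
      rw [e_symm, e_succ 0 i (by omega) hi, if_neg (by omega)]
      norm_num

/-- The Hankel transform of the sequence `1, -C_0, -C_1, -C_2, …` (the expansion of
`1 - x·c(x) = 1/c(x)`) is `(-1)^n · (n+1)`. -/
theorem hankel_transform_one_sub_x_catalan (a : ℕ → ℤ)
    (h0 : a 0 = 1) (h : ∀ n : ℕ, a (n + 1) = -(catalan n : ℤ)) (n : ℕ) :
    Matrix.det (Matrix.of fun i j : Fin (n + 1) => a (i.1 + j.1)) =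
      (-1) ^ n * (n + 1) := by
  set N := n + 1 with hN
  set Bm : Matrix (Fin N) (Fin N) ℤ := Matrix.of fun i k => hb i.1 k.1 with hBm
  set Wm : Matrix (Fin N) (Fin N) ℤ := Matrix.of fun k l => hw k.1 l.1 with hWm
  -- Step 1: the Hankel matrix factors as Bm * Wm * Bmᵀ
  have hfact : (Matrix.of fun i j : Fin N => a (i.1 + j.1)) = Bm * Wm * Bm.transpose := by
    ext i j
    rw [Matrix.mul_apply]
    simp only [Matrix.mul_apply, Matrix.transpose_apply, hBm, hWm, Matrix.of_apply]
    have : ∀ l : Fin N, (∑ k : Fin N, hb i.1 k.1 * hw k.1 l.1) * hb j.1 l.1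
        = ∑ k : Fin N, hb i.1 k.1 * hw k.1 l.1 * hb j.1 l.1 := by
      intro l; rw [Finset.sum_mul]
    simp only [this]
    have conv : (∑ l : Fin N, ∑ k : Fin N, hb i.1 k.1 * hw k.1 l.1 * hb j.1 l.1)
        = ∑ l ∈ Finset.range N, ∑ k ∈ Finset.range N, hb i.1 k * hw k l * hb j.1 l := by
      rw [← Fin.sum_univ_eq_sum_range (fun l => ∑ k ∈ Finset.range N,
        hb i.1 k * hw k l * hb j.1 l) N]
      exact Finset.sum_congr rfl fun l _ =>
        Fin.sum_univ_eq_sum_range (fun k => hb i.1 k * hw k l.1 * hb j.1 l.1) N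
    rw [conv, e_main i.1 j.1 i.isLt j.isLt]
    rcases Nat.eq_zero_or_pos (i.1 + j.1) with hm | hm
    · rw [if_pos hm, hm, h0]
    · obtain ⟨m, hm'⟩ : ∃ m, i.1 + j.1 = m + 1 := ⟨i.1 + j.1 - 1, by omega⟩
      rw [if_neg (by omega), hm', h m, Nat.succ_sub_one]
  rw [hfact, Matrix.det_mul, Matrix.det_mul, Matrix.det_transpose]
  -- Step 2: det Bm = 1
  have hdetB : Bm.det = 1 := by
    rw [Matrix.det_of_lowerTriangular Bm (fun i j hij => by
      exact hb_eq_zero i.1 j.1 hij)]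
    rw [Finset.prod_eq_one]
    intro i _
    exact hb_diag i.1
  -- Step 3: det Wm = (-1)^n * (n+1)
  set Vm : Matrix (Fin N) (Fin N) ℤ :=
    Matrix.of fun k l => ((max k.1 l.1 : ℕ) : ℤ) + 1 with hVm
  set Dm : Matrix (Fin N) (Fin N) ℤ :=
    Matrix.diagonal (fun k : Fin N => (-1 : ℤ)^(k.1)) with hDm
  have hWDVD : Wm = Dm * Vm * Dm := by
    ext k l
    simp only [hDm, hWm, hVm, Matrix.mul_diagonal, Matrix.diagonal_mul, Matrix.of_apply]
    unfold hw
    rw [pow_add]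
    ring
  have hdetD2 : Dm.det * Dm.det = 1 := by
    rw [Matrix.det_diagonal, ← Finset.prod_mul_distrib, Finset.prod_eq_one]
    intro k _
    rw [← mul_pow]
    norm_num
  have hdetW : Wm.det = Vm.det := by
    rw [hWDVD, Matrix.det_mul, Matrix.det_mul]
    linear_combination Vm.det * hdetD2
  set Nm : Matrix (Fin N) (Fin N) ℤ :=
    Matrix.of fun k l => if k.1 + 1 = l.1 then (1:ℤ) else 0 with hNm
  set Em : Matrix (Fin N) (Fin N) ℤ := 1 - Nm with hEm
  set Fm : Matrix (Fin N) (Fin N) ℤ :=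
    Matrix.of fun k l => if k.1 < n then (if l.1 ≤ k.1 then (-1:ℤ) else 0) else (n:ℤ)+1
    with hFm
  have hEV : Em * Vm = Fm := by
    ext k l
    rw [hEm, Matrix.sub_mul, Matrix.one_mul, Matrix.sub_apply, Matrix.mul_apply]
    simp only [hNm, hVm, hFm, Matrix.of_apply]
    by_cases hk : k.1 < n
    · rw [Finset.sum_eq_single_of_mem (⟨k.1+1, by omega⟩ : Fin N) (Finset.mem_univ _)
        (fun m _ hm => by
          rw [if_neg (fun hc => hm (Fin.ext hc.symm)), zero_mul])]
      rw [if_pos rfl, one_mul, if_pos hk]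
      by_cases hl : l.1 ≤ k.1
      · rw [Nat.max_eq_left hl, Nat.max_eq_left (by omega : l.1 ≤ k.1+1), if_pos hl]
        push_cast; ring
      · rw [Nat.max_eq_right (by omega : k.1 ≤ l.1),
          Nat.max_eq_right (show k.1+1 ≤ l.1 by omega), if_neg hl]
        ring
    · rw [Finset.sum_eq_zero (fun m _ => by
        rw [if_neg (by have := m.isLt; omega : ¬(k.1+1 = m.1)), zero_mul])]
      rw [if_neg hk, Nat.max_eq_left (by have := l.isLt; omega : l.1 ≤ k.1)]
      have : k.1 = n := by have := k.isLt; omega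
      rw [this]
      ring
  have hdetE : Em.det = 1 := by
    rw [Matrix.det_of_upperTriangular (show Em.BlockTriangular id from fun i j hij => by
      rw [hEm, Matrix.sub_apply, Matrix.one_apply_ne (ne_of_gt (show j < i from hij))]
      simp only [hNm, Matrix.of_apply]
      have hij' : j.1 < i.1 := hij
      rw [if_neg (show ¬(i.1+1 = j.1) by omega)]
      ring)]
    rw [Finset.prod_eq_one]
    intro i _
    rw [hEm, Matrix.sub_apply, Matrix.one_apply_eq]
    simp only [hNm, Matrix.of_apply]
    rw [if_neg (by omega)]
    ring
  have hdetF : Fm.det = (-1)^n * ((n:ℤ)+1) := by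
    rw [Matrix.det_of_lowerTriangular Fm (fun i j hij => by
      simp only [hFm, Matrix.of_apply]
      have hij' : i.1 < j.1 := hij
      rw [if_pos (by have := j.isLt; omega : i.1 < n), if_neg (by omega)])]
    rw [show (Finset.univ : Finset (Fin N)).prod (fun i => Fm i i)
        = ∏ i : Fin (n+1), Fm i i from rfl]
    rw [Fin.prod_univ_castSucc]
    have hlast : Fm (Fin.last n) (Fin.last n) = (n:ℤ)+1 := by
      simp only [hFm, Matrix.of_apply, Fin.val_last]
      rw [if_neg (lt_irrefl n)]
    have hcast : ∀ i : Fin n, Fm i.castSucc i.castSucc = -1 := by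
      intro i
      simp only [hFm, Matrix.of_apply, Fin.coe_castSucc]
      rw [if_pos i.isLt, if_pos le_rfl]
    simp only [hcast, hlast]
    rw [Finset.prod_const]
    simp
  have hdetV : Vm.det = (-1)^n * ((n:ℤ)+1) := by
    have := congrArg Matrix.det hEV
    rw [Matrix.det_mul, hdetE, one_mul] at this
    rw [this, hdetF]
  rw [hdetB, hdetW, hdetV]
  push_cast
  ring
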